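/- Let α > 2β > 0 with gcd(α,β) = 1 and ᾱ = α/gcd(α,2β) odd, and let F' be the reduced map. Define, for z ∈ Z, T = (α-2β)·Σ_{t=0}^{α-1} y_t·χ₀(y_t) - 2β·Σ_{t=0}^{α-1} y_t·χ₁(y_t), where y_t = (F')ᵗ(z) and χ₀, χ₁ are indicators of even- and odd-order intervals (z mod α ≥ α-2β, resp. z mod α < α-2β). Then T does not depend on z and equals 2αβ(α - 2β). -/

import Mathlib

/-- The reduced interval-exchange map F' on ℤ. -/
def Fred (α β : ℤ) (z : ℤ) : ℤ :=
  if z % α < α - 2 * β then z + 4 * β else z - 2 * (α - 2 * β)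

namespace Stmt19Aux

/-- Indicator of the even-order interval. -/
def chi (α β x : ℤ) : ℤ := if x % α < α - 2 * β then 0 else 1

lemma fred_eq (α β x : ℤ) : Fred α β x = x + 4 * β - 2 * α * chi α β x := by
  unfold Fred chi; split <;> ring

lemma fred_modeq (α β x : ℤ) : Fred α β x ≡ x + 4 * β [ZMOD α] := by
  rw [fred_eq]
  have h : x + 4 * β - 2 * α * chi α β x = (x + 4 * β) + α * (-(2 * chi α β x)) := by ring
  rw [h]
  unfold Int.ModEq
  rw [Int.add_mul_emod_self_left]

lemma chi_congr (α β x y : ℤ) (h : x % α = y % α) : chi α β x = chi α β y := by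
  unfold chi; rw [h]

lemma iter_modeq (α β z : ℤ) (t : ℕ) : (Fred α β)^[t] z ≡ z + 4 * β * t [ZMOD α] := by
  induction t with
  | zero => simp
  | succ n ih =>
      rw [Function.iterate_succ_apply']
      calc (Fred α β) ((Fred α β)^[n] z)
          ≡ (Fred α β)^[n] z + 4 * β [ZMOD α] := fred_modeq α β _
        _ ≡ (z + 4 * β * n) + 4 * β [ZMOD α] := ih.add_right _
        _ = z + 4 * β * ((n : ℤ) + 1) := by ring
        _ = z + 4 * β * ((n + 1 : ℕ) : ℤ) := by push_cast; ring

/-- The residue-sum function. -/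
def R (α β x : ℤ) : ℤ := ∑ t ∈ Finset.range α.toNat, (x + 4 * β * t) % α

lemma R_add_alpha (α β x v : ℤ) : R α β (x + α * v) = R α β x := by
  unfold R
  refine Finset.sum_congr rfl fun t _ => ?_
  have h : x + α * v + 4 * β * t = (x + 4 * β * t) + α * v := by ring
  rw [h, Int.add_mul_emod_self_left]

lemma R_add_4beta (α β : ℤ) (hα : 0 < α) (x : ℤ) : R α β (x + 4 * β) = R α β x := by
  unfold R
  set n := α.toNat with hn
  have hnα : (n : ℤ) = α := Int.toNat_of_nonneg hα.le
  set f : ℕ → ℤ := fun t => (x + 4 * β * t) % α with hf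
  have h1 : ∀ t : ℕ, (x + 4 * β + 4 * β * t) % α = f (t + 1) := by
    intro t
    have : x + 4 * β + 4 * β * t = x + 4 * β * ((t : ℤ) + 1) := by ring
    rw [hf]; push_cast; rw [this]
  rw [Finset.sum_congr rfl fun t _ => h1 t]
  have h2 : ∑ t ∈ Finset.range (n + 1), f t = (∑ t ∈ Finset.range n, f (t + 1)) + f 0 :=
    Finset.sum_range_succ' f n
  have h3 : ∑ t ∈ Finset.range (n + 1), f t = (∑ t ∈ Finset.range n, f t) + f n :=
    Finset.sum_range_succ f n
  have h4 : f n = f 0 := by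
    show (x + 4 * β * (n : ℤ)) % α = (x + 4 * β * ((0 : ℕ) : ℤ)) % α
    rw [hnα]
    have h : x + 4 * β * α = x + 4 * β * ((0 : ℕ) : ℤ) + α * (4 * β) := by push_cast; ring
    rw [h, Int.add_mul_emod_self_left]
  have h5 : (Finset.range n).sum f = ∑ t ∈ Finset.range n, f t := rfl
  omega

lemma R_shift (α β : ℤ) (hα : 0 < α) (x u : ℤ) : R α β (x + 4 * β * u) = R α β x := by
  induction u using Int.induction_on with
  | zero => simp
  | succ k ih =>
      have h : x + 4 * β * ((k : ℤ) + 1) = (x + 4 * β * k) + 4 * β := by ring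
      rw [h, R_add_4beta α β hα, ih]
  | pred k ih =>
      have h := R_add_4beta α β hα (x + 4 * β * (-(k : ℤ) - 1))
      have h2 : x + 4 * β * (-(k : ℤ) - 1) + 4 * β = x + 4 * β * (-(k : ℤ)) := by ring
      rw [h2] at h
      exact h.symm.trans ih

lemma chi_key (α β : ℤ) (hα : 0 < α) (hβ : 0 < β) (hαβ : 2 * β < α) (x : ℤ) :
    α * chi α β x = x % α + 2 * β - (x + 2 * β) % α := by
  have h0 : 0 ≤ x % α := Int.emod_nonneg x hα.ne'
  have h1 : x % α < α := Int.emod_lt_of_pos x hα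
  have hx : x + 2 * β = (x % α + 2 * β) + α * (x / α) := by
    have := Int.mul_ediv_add_emod x α
    linarith
  have hm : (x + 2 * β) % α = (x % α + 2 * β) % α := by
    rw [hx, Int.add_mul_emod_self_left]
  unfold chi
  split
  · rename_i h
    have : (x % α + 2 * β) % α = x % α + 2 * β :=
      Int.emod_eq_of_lt (by linarith) (by linarith)
    rw [hm, this]; ring
  · rename_i h
    push_neg at h
    have hsub : (x % α + 2 * β) % α = (x % α + 2 * β - α) % α := by
      have h' : x % α + 2 * β = (x % α + 2 * β - α) + α * 1 := by ring
      conv_lhs => rw [h']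
      rw [Int.add_mul_emod_self_left]
    have : (x % α + 2 * β - α) % α = x % α + 2 * β - α :=
      Int.emod_eq_of_lt (by linarith) (by linarith)
    rw [hm, hsub, this]; ring

lemma bezout (α β : ℤ) (hβ : 0 < β) (hαβ : 2 * β < α) (hgcd : Int.gcd α β = 1)
    (abar : ℕ) (habar : (abar : ℤ) = α / Int.gcd α (2 * β)) (hodd : Odd abar) :
    ∃ u v : ℤ, 2 * β = 4 * β * u + α * v := by
  have hα : 0 < α := by linarith
  set d : ℤ := (Int.gcd α (4 * β) : ℤ) with hd
  have hdα : d ∣ α := Int.gcd_dvd_left _ _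
  have hd4β : d ∣ 4 * β := Int.gcd_dvd_right _ _
  have hcop : IsCoprime α β := Int.isCoprime_iff_gcd_eq_one.mpr hgcd
  have hcd : IsCoprime d β := hcop.of_isCoprime_of_dvd_left hdα
  have hd4 : d ∣ 4 := hcd.dvd_of_dvd_mul_right hd4β
  have hd0 : 0 < d := by
    have hne : Int.gcd α (4 * β) ≠ 0 := by
      intro h
      rw [Int.gcd_eq_zero_iff] at h
      omega
    rw [hd]
    exact_mod_cast Nat.pos_of_ne_zero hne
  have hd2 : d ∣ 2 := by
    by_contra hcon
    have hdle : d ≤ 4 := Int.le_of_dvd (by norm_num) hd4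
    have hd4' : d = 4 := by interval_cases d <;> omega
    have h4α : (4 : ℤ) ∣ α := hd4' ▸ hdα
    -- show gcd α (2β) = 2
    set g : ℤ := (Int.gcd α (2 * β) : ℤ) with hg
    have hgα : g ∣ α := Int.gcd_dvd_left _ _
    have hg2β : g ∣ 2 * β := Int.gcd_dvd_right _ _
    have hcg : IsCoprime g β := hcop.of_isCoprime_of_dvd_left hgα
    have hg2 : g ∣ 2 := hcg.dvd_of_dvd_mul_right hg2β
    have h2g : (2 : ℤ) ∣ g := Int.dvd_coe_gcd (dvd_trans ⟨2, by norm_num⟩ h4α) ⟨β, rfl⟩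
    have hgeq : g = 2 := by
      have hg0 : 0 ≤ g := Int.natCast_nonneg _
      exact Int.dvd_antisymm hg0 (by norm_num) hg2 h2g
    obtain ⟨k, hk⟩ := h4α
    have habar2 : (abar : ℤ) = 2 * k := by
      rw [habar, hgeq, hk]
      omega
    have heven : Even (abar : ℤ) := ⟨k, by omega⟩
    rw [Int.even_coe_nat] at heven
    exact (Nat.not_even_iff_odd.mpr hodd) heven
  have hd2β : d ∣ 2 * β := dvd_trans hd2 ⟨β, rfl⟩
  obtain ⟨k, hk⟩ := hd2β
  have hbez := Int.gcd_eq_gcd_ab α (4 * β)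
  refine ⟨Int.gcdB α (4 * β) * k, Int.gcdA α (4 * β) * k, ?_⟩
  rw [hk]
  have : d = α * Int.gcdA α (4 * β) + 4 * β * Int.gcdB α (4 * β) := hbez
  rw [this]; ring

lemma count (α β : ℤ) (hβ : 0 < β) (hαβ : 2 * β < α) (hgcd : Int.gcd α β = 1)
    (abar : ℕ) (habar : (abar : ℤ) = α / Int.gcd α (2 * β)) (hodd : Odd abar)
    (z : ℤ) :
    ∑ t ∈ Finset.range α.toNat, chi α β (z + 4 * β * t) = 2 * β := by
  have hα : 0 < α := by linarith
  set n := α.toNat with hn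
  have hnα : (n : ℤ) = α := Int.toNat_of_nonneg hα.le
  obtain ⟨u, v, huv⟩ := bezout α β hβ hαβ hgcd abar habar hodd
  have hmul : α * (∑ t ∈ Finset.range n, chi α β (z + 4 * β * t)) = α * (2 * β) := by
    rw [Finset.mul_sum]
    have hterm : ∀ t ∈ Finset.range n, α * chi α β (z + 4 * β * t)
        = ((z + 4 * β * t) % α + 2 * β - ((z + 2 * β) + 4 * β * t) % α) := by
      intro t _
      rw [chi_key α β hα hβ hαβ]
      have : z + 4 * β * (t : ℤ) + 2 * β = (z + 2 * β) + 4 * β * t := by ring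
      rw [this]
    rw [Finset.sum_congr rfl hterm]
    have hsplit : ∑ t ∈ Finset.range n,
        ((z + 4 * β * t) % α + 2 * β - ((z + 2 * β) + 4 * β * t) % α)
        = R α β z + n * (2 * β) - R α β (z + 2 * β) := by
      rw [Finset.sum_sub_distrib, Finset.sum_add_distrib, Finset.sum_const,
        Finset.card_range]
      unfold R
      rw [← hn]
      push_cast
      ring
    rw [hsplit]
    have hRinv : R α β (z + 2 * β) = R α β z := by
      have h1 : z + 2 * β = (z + 4 * β * u) + α * v := by rw [huv]; ring
      rw [h1, R_add_alpha, R_shift α β hα]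
    rw [hRinv, hnα]
    ring
  exact mul_left_cancel₀ hα.ne' hmul

lemma pointwise (α β x : ℤ) :
    (Fred α β x) ^ 2 - x ^ 2
      = -4 * (if x % α < α - 2 * β then -(2 * β) * x else (α - 2 * β) * x)
        + 16 * β ^ 2 + (4 * α ^ 2 - 16 * α * β) * chi α β x := by
  unfold Fred chi
  by_cases h : x % α < α - 2 * β <;> simp [h] <;> ring

end Stmt19Aux

open Stmt19Aux in
/-- T(z) = (α-2β)·Σ y_t χ₀(y_t) - 2β·Σ y_t χ₁(y_t) is independent of z
and equals 2αβ(α-2β). -/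
theorem stmt19 (α β : ℤ) (hβ : 0 < β) (hαβ : 2 * β < α) (hgcd : Int.gcd α β = 1)
    (abar : ℕ) (habar : (abar : ℤ) = α / Int.gcd α (2 * β)) (hodd : Odd abar)
    (z : ℤ) :
    (∑ t ∈ Finset.range α.toNat,
        (if (Fred α β)^[t] z % α < α - 2 * β then -(2 * β) * (Fred α β)^[t] z
         else (α - 2 * β) * (Fred α β)^[t] z)) = 2 * α * β * (α - 2 * β) := by
  have hα : 0 < α := by linarith
  set n := α.toNat with hn
  have hnα : (n : ℤ) = α := Int.toNat_of_nonneg hα.le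
  set y : ℕ → ℤ := fun t => (Fred α β)^[t] z with hy
  have hystep : ∀ t : ℕ, y (t + 1) = Fred α β (y t) := by
    intro t
    rw [hy]
    exact Function.iterate_succ_apply' (Fred α β) t z
  have hchi : ∀ t : ℕ, chi α β (y t) = chi α β (z + 4 * β * t) := by
    intro t
    exact chi_congr α β _ _ (iter_modeq α β z t)
  have hcount : ∑ t ∈ Finset.range n, chi α β (y t) = 2 * β := by
    rw [Finset.sum_congr rfl (fun t _ => hchi t)]
    exact count α β hβ hαβ hgcd abar habar hodd z
  -- periodicity
  have hper : y n = y 0 := by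
    have h1 : ∑ t ∈ Finset.range n, (y (t + 1) - y t) = y n - y 0 :=
      Finset.sum_range_sub y n
    have h2 : ∀ t ∈ Finset.range n, y (t + 1) - y t = 4 * β - 2 * α * chi α β (y t) := by
      intro t _
      rw [hystep t, fred_eq]
      ring
    rw [Finset.sum_congr rfl h2, Finset.sum_sub_distrib, Finset.sum_const,
      Finset.card_range, ← Finset.mul_sum, hcount] at h1
    have : (n : ℤ) * (4 * β) - 2 * α * (2 * β) = y n - y 0 := by
      rw [← h1]; push_cast; ring
    rw [hnα] at this
    linarith
  -- telescoping of squares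
  have hsq : ∑ t ∈ Finset.range n, ((y (t + 1)) ^ 2 - (y t) ^ 2) = 0 := by
    rw [Finset.sum_range_sub (fun t => (y t) ^ 2) n, hper]
    ring
  have hpt : ∀ t ∈ Finset.range n, (y (t + 1)) ^ 2 - (y t) ^ 2
      = -4 * (if (y t) % α < α - 2 * β then -(2 * β) * (y t) else (α - 2 * β) * (y t))
        + 16 * β ^ 2 + (4 * α ^ 2 - 16 * α * β) * chi α β (y t) := by
    intro t _
    rw [hystep t]
    exact pointwise α β (y t)
  rw [Finset.sum_congr rfl hpt, Finset.sum_add_distrib, Finset.sum_add_distrib,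
    ← Finset.mul_sum, ← Finset.mul_sum] at hsq
  have e1 : (∑ _i ∈ Finset.range n, β ^ 2) = (n : ℤ) * β ^ 2 := by
    rw [Finset.sum_const, Finset.card_range, nsmul_eq_mul]
  rw [e1, ← Finset.mul_sum, hcount, hnα] at hsq
  have final : (∑ t ∈ Finset.range n,
      if y t % α < α - 2 * β then -(2 * β) * y t else (α - 2 * β) * y t)
      = 2 * α * β * (α - 2 * β) := by linarith
  exact final
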